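/- For μ > 0, the tensor H^T *_3 H + μ I is invertible with respect to the Einstein product, where H is any tensor of size M×N×P×M×N×P. -/
import Mathlib


def einsteinProd {I K J : Type*} [Fintype K]
    (A : I → K → ℝ) (B : K → J → ℝ) : I → J → ℝ :=
  fun i j => ∑ k, A i k * B k j

def blockTranspose {I J : Type*} (A : I → J → ℝ) : J → I → ℝ :=
  fun j i => A i j

def idTensor (K : Type*) [DecidableEq K] : K → K → ℝ :=
  fun i j => if i = j then 1 else 0

lemma einsteinProd_eq_mul {I K J : Type*} [Fintype K]
    (A : I → K → ℝ) (B : K → J → ℝ) :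
    einsteinProd A B = fun i j => (Matrix.of A * Matrix.of B) i j := by
  funext i j
  simp [einsteinProd, Matrix.mul_apply]

lemma idTensor_eq_one {K : Type*} [DecidableEq K] [Fintype K] :
    idTensor K = fun i j => (1 : Matrix K K ℝ) i j := by
  funext i j
  simp [idTensor, Matrix.one_apply]

/-- For `μ > 0`, the tensor `H^T *_3 H + μ I` is invertible with respect to the
Einstein product, for `H` of size M×N×P×M×N×P. -/
theorem HtH_add_mu_invertible {M N P : ℕ} (μ : ℝ) (hμ : 0 < μ)
    (H : Fin M × Fin N × Fin P → Fin M × Fin N × Fin P → ℝ) :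
    ∃ X : Fin M × Fin N × Fin P → Fin M × Fin N × Fin P → ℝ,
      einsteinProd (einsteinProd (blockTranspose H) H +
          μ • idTensor (Fin M × Fin N × Fin P)) X = idTensor (Fin M × Fin N × Fin P) ∧
      einsteinProd X (einsteinProd (blockTranspose H) H +
          μ • idTensor (Fin M × Fin N × Fin P)) = idTensor (Fin M × Fin N × Fin P) := by
  let K := Fin M × Fin N × Fin P
  let Hm : Matrix K K ℝ := Matrix.of H
  let A : Matrix K K ℝ := Hm.conjTranspose * Hm + Matrix.diagonal (fun _ => μ)
  -- A is positive definite
  have hdiag : (Matrix.diagonal (fun _ : K => μ)).PosDef :=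
    Matrix.posDef_diagonal_iff.mpr fun _ => hμ
  have hApd : A.PosDef :=
    Matrix.PosDef.posSemidef_add (Matrix.posSemidef_conjTranspose_mul_self Hm) hdiag
  have hUnit : IsUnit A := hApd.isUnit
  have h1 : A * A⁻¹ = 1 := Matrix.mul_nonsing_inv A ((Matrix.isUnit_iff_isUnit_det A).mp hUnit)
  have h2 : A⁻¹ * A = 1 := Matrix.nonsing_inv_mul A ((Matrix.isUnit_iff_isUnit_det A).mp hUnit)
  -- identify the tensor with the matrix A
  have hTen : (einsteinProd (blockTranspose H) H + μ • idTensor K)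
      = fun i j => A i j := by
    funext i j
    simp only [Pi.add_apply, Pi.smul_apply, einsteinProd, blockTranspose, idTensor,
      Matrix.add_apply, Matrix.mul_apply, Matrix.diagonal_apply, Matrix.conjTranspose_apply,
      Matrix.of_apply, star_trivial, smul_eq_mul, mul_ite, mul_one, mul_zero, A, Hm, K]
  refine ⟨fun i j => A⁻¹ i j, ?_, ?_⟩
  · rw [hTen, einsteinProd_eq_mul, idTensor_eq_one]
    funext i j
    rw [show (Matrix.of fun i j => A i j) = A from rfl,
      show (Matrix.of fun i j => A⁻¹ i j) = A⁻¹ from rfl, h1]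
  · rw [hTen, einsteinProd_eq_mul, idTensor_eq_one]
    funext i j
    rw [show (Matrix.of fun i j => A i j) = A from rfl,
      show (Matrix.of fun i j => A⁻¹ i j) = A⁻¹ from rfl, h2]
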